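/- arXiv:2504.20618 — 3 statements merged into one kernel-verified Lean document; each statement's English description precedes it below -/
import Mathlib

section
/- Let E be the Euclidean space ℝ³ with the standard inner product ⟨·,·⟩ and norm ‖·‖. Let n ∈ E be a unit vector, and let n₁, n₂ ∈ E be vectors whose projections onto the hyperplane orthogonal to n, defined by p₁ := n₁ − ⟨n₁, n⟩·n and p₂ := n₂ − ⟨n₂, n⟩·n, are both nonzero. Let d ≥ 0, let q₁ ∈ E, and let S ⊆ E be a set such that ⟨n₁, x − q₁⟩ ≤ 0 for every x ∈ S. Then for every x ∈ S, ⟨n₁, (x + (d/2)·(p₂/‖p₂‖)) − (q₁ + (d/2)·(p₁/‖p₁‖))⟩ ≤ 0. (That is, after shifting the set S by (d/2)·p₂/‖p₂‖ and the halfspace base point q₁ by (d/2)·p₁/‖p₁‖, the shifted set remains contained in the shifted non-positive halfspace {y : ⟨n₁, y − q₁ − (d/2)·p₁/‖p₁‖⟩ ≤ 0}.) -/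
open RealInnerProductSpace

/-- Lemma 1 (first part): shifting a set contained in the non-positive halfspace of a
surface, together with the halfspace base point, along the normalized projections onto
the hyperplane orthogonal to the unit vector `n`, preserves the containment. -/
theorem stmt0
    (n n₁ n₂ : EuclideanSpace ℝ (Fin 3)) (hn : ‖n‖ = 1)
    (p₁ p₂ : EuclideanSpace ℝ (Fin 3))
    (hp₁ : p₁ = n₁ - ⟪n₁, n⟫ • n) (hp₂ : p₂ = n₂ - ⟪n₂, n⟫ • n)
    (hp₁0 : p₁ ≠ 0) (hp₂0 : p₂ ≠ 0)
    (d : ℝ) (hd : 0 ≤ d)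
    (q₁ : EuclideanSpace ℝ (Fin 3)) (S : Set (EuclideanSpace ℝ (Fin 3)))
    (hS : ∀ x ∈ S, ⟪n₁, x - q₁⟫ ≤ 0) :
    ∀ x ∈ S,
      ⟪n₁, (x + (d / 2) • (‖p₂‖⁻¹ • p₂)) - (q₁ + (d / 2) • (‖p₁‖⁻¹ • p₁))⟫ ≤ 0 := by
  intro x hx
  have hnn : ⟪n, n⟫ = 1 := by
    rw [real_inner_self_eq_norm_sq, hn]; norm_num
  have hnp₁ : ⟪n, p₁⟫ = 0 := by
    rw [hp₁, inner_sub_right, real_inner_smul_right, hnn, mul_one,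
      real_inner_comm n n₁, sub_self]
  have hnp₂ : ⟪n, p₂⟫ = 0 := by
    rw [hp₂, inner_sub_right, real_inner_smul_right, hnn, mul_one,
      real_inner_comm n n₂, sub_self]
  have h1 : ⟪n₁, p₂⟫ = ⟪p₁, p₂⟫ := by
    conv_rhs => rw [hp₁]
    rw [inner_sub_left, real_inner_smul_left, hnp₂, mul_zero, sub_zero]
  have h2 : ⟪n₁, p₁⟫ = ‖p₁‖ ^ 2 := by
    have hn₁ : n₁ = p₁ + ⟪n₁, n⟫ • n := by rw [hp₁]; abel
    conv_lhs => rw [hn₁]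
    rw [inner_add_left, real_inner_smul_left, hnp₁, mul_zero, add_zero,
      ← real_inner_self_eq_norm_sq]
  have hcs : ⟪p₁, p₂⟫ ≤ ‖p₁‖ * ‖p₂‖ := real_inner_le_norm p₁ p₂
  have hp₁pos : 0 < ‖p₁‖ := norm_pos_iff.mpr hp₁0
  have hp₂pos : 0 < ‖p₂‖ := norm_pos_iff.mpr hp₂0
  have key : ⟪n₁, (x + (d / 2) • (‖p₂‖⁻¹ • p₂)) - (q₁ + (d / 2) • (‖p₁‖⁻¹ • p₁))⟫
      = ⟪n₁, x - q₁⟫ + (d / 2) * (‖p₂‖⁻¹ * ⟪p₁, p₂⟫ - ‖p₁‖⁻¹ * ‖p₁‖ ^ 2) := by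
    rw [show (x + (d / 2) • (‖p₂‖⁻¹ • p₂)) - (q₁ + (d / 2) • (‖p₁‖⁻¹ • p₁))
        = (x - q₁) + ((d / 2) • (‖p₂‖⁻¹ • p₂) - (d / 2) • (‖p₁‖⁻¹ • p₁)) by abel]
    simp only [inner_add_right, inner_sub_right, real_inner_smul_right, h1, h2]
    ring
  rw [key]
  have hfac : ‖p₂‖⁻¹ * ⟪p₁, p₂⟫ - ‖p₁‖⁻¹ * ‖p₁‖ ^ 2 ≤ 0 := by
    rw [sq, ← mul_assoc, inv_mul_cancel₀ hp₁pos.ne', one_mul, sub_nonpos]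
    calc ‖p₂‖⁻¹ * ⟪p₁, p₂⟫ ≤ ‖p₂‖⁻¹ * (‖p₁‖ * ‖p₂‖) :=
          mul_le_mul_of_nonneg_left hcs (inv_nonneg.mpr hp₂pos.le)
      _ = ‖p₁‖ := by field_simp
  have := hS x hx
  nlinarith [mul_nonneg (by linarith : (0:ℝ) ≤ d / 2) (neg_nonneg.mpr hfac)]
end

section
/- Let E be the Euclidean space ℝ³ with the standard inner product ⟨·,·⟩ and norm ‖·‖. Let n ∈ E be a unit vector and let m ∈ E be a vector whose projection p := m − ⟨m, n⟩·n onto the hyperplane orthogonal to n is nonzero. Let d ≥ 0 and let q, x ∈ E satisfy ⟨m, x − q⟩ ≤ 0. Then every point y ∈ E with ⟨n, y − x⟩ = 0 and ‖y − x‖ ≤ d/2 satisfies ⟨m, y − (q + (d/2)·(p/‖p‖))⟩ ≤ 0. (That is, the closed disk of radius d/2 centered at x within the hyperplane through x orthogonal to n is entirely contained in the non-positive halfspace of the surface with normal m after its base point q is shifted by (d/2)·p/‖p‖.) -/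
open RealInnerProductSpace

/-- Lemma 1 (second part): the disk of radius `d/2` centered at `x` inside the hyperplane
through `x` orthogonal to `n` is contained in the non-positive halfspace of the surface
with normal `m` after its base point `q` is shifted by `(d/2) • p/‖p‖`, where `p` is the
projection of `m` onto the hyperplane orthogonal to `n`. -/
theorem stmt2
    (n m : EuclideanSpace ℝ (Fin 3)) (hn : ‖n‖ = 1)
    (p : EuclideanSpace ℝ (Fin 3)) (hp : p = m - ⟪m, n⟫ • n) (hp0 : p ≠ 0)
    (d : ℝ) (hd : 0 ≤ d)
    (q x : EuclideanSpace ℝ (Fin 3)) (hqx : ⟪m, x - q⟫ ≤ 0) :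
    ∀ y : EuclideanSpace ℝ (Fin 3), ⟪n, y - x⟫ = 0 → ‖y - x‖ ≤ d / 2 →
      ⟪m, y - (q + (d / 2) • (‖p‖⁻¹ • p))⟫ ≤ 0 := by
  intro y hny hyx
  have hnn : ⟪n, n⟫ = (1 : ℝ) := by
    rw [real_inner_self_eq_norm_sq, hn]; norm_num
  have hmyx : ⟪m, y - x⟫ = ⟪p, y - x⟫ := by
    rw [hp, inner_sub_left, inner_smul_left]
    have : ⟪n, y - x⟫ = 0 := hny
    rw [this]; ring
  have hmp : ⟪m, p⟫ = ‖p‖ ^ 2 := by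
    have hnp : ⟪n, p⟫ = 0 := by
      rw [hp, inner_sub_right, inner_smul_right, hnn, real_inner_comm]; ring
    have : ⟪p, p⟫ = ⟪m, p⟫ - ⟪m, n⟫ * ⟪n, p⟫ := by
      nth_rewrite 1 [hp]
      rw [inner_sub_left, real_inner_smul_left]
    rw [hnp] at this
    rw [← real_inner_self_eq_norm_sq, this]; ring
  have hpn : (0 : ℝ) < ‖p‖ := norm_pos_iff.mpr hp0
  have hcs : ⟪p, y - x⟫ ≤ ‖p‖ * (d / 2) := by
    calc ⟪p, y - x⟫ ≤ ‖p‖ * ‖y - x‖ := real_inner_le_norm p (y - x)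
      _ ≤ ‖p‖ * (d / 2) := by nlinarith
  have hexp : ⟪m, y - (q + (d / 2) • (‖p‖⁻¹ • p))⟫
      = ⟪m, y - x⟫ + ⟪m, x - q⟫ - (d / 2) * ‖p‖⁻¹ * ⟪m, p⟫ := by
    rw [inner_sub_right, inner_add_right, inner_smul_right, inner_smul_right,
      inner_sub_right, inner_sub_right]
    ring
  rw [hexp, hmyx, hmp]
  have h1 : (d / 2) * ‖p‖⁻¹ * ‖p‖ ^ 2 = ‖p‖ * (d / 2) := by
    field_simp
  nlinarith
end

section
/- Let n be a finite type, let Σ be an n×n complex positive semidefinite Hermitian matrix, let ι be a nonempty finite index set, let B : ι → Matrix n n ℂ be a family of positive definite Hermitian matrices, and let w : ι → ℝ be nonnegative weights with ∑ᵢ wᵢ = 1. Then the convex combination ∑ᵢ wᵢ • Bᵢ is positive definite (hence invertible), and Re(trace((∑ᵢ wᵢ • Bᵢ)⁻¹ * Σ)) ≤ ∑ᵢ wᵢ · Re(trace(Bᵢ⁻¹ * Σ)); that is, the function B ↦ Re(trace(B⁻¹ Σ)) is convex on the set of positive definite Hermitian matrices. -/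
open Matrix
open scoped BigOperators ComplexOrder

lemma psd_smul {n : Type*} [Fintype n] {A : Matrix n n ℂ} (hA : A.PosSemidef)
    {c : ℝ} (hc : 0 ≤ c) : (c • A).PosSemidef := by
  have : (c • A) = ((c : ℂ) • A) := by
    ext i j; simp [Complex.real_smul]
  rw [this]
  refine Matrix.PosSemidef.of_dotProduct_mulVec_nonneg ?_ ?_
  · rw [Matrix.IsHermitian, Matrix.conjTranspose_smul, Complex.star_def,
      Complex.conj_ofReal, hA.1.eq]
  · intro x
    rw [Matrix.smul_mulVec, dotProduct_smul]
    have := hA.dotProduct_mulVec_nonneg x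
    exact smul_nonneg (by exact_mod_cast (by exact_mod_cast hc : (0:ℝ) ≤ c) : (0:ℂ) ≤ (c:ℂ)) this

lemma psd_sum {n ι : Type*} [Fintype n] [Fintype ι] {A : ι → Matrix n n ℂ}
    (h : ∀ i, (A i).PosSemidef) : (∑ i, A i).PosSemidef := by
  classical
  refine Finset.sum_induction _ _ (fun a b ha hb => ha.add hb) Matrix.PosSemidef.zero
    (fun i _ => h i)

lemma psd_trace_nonneg {n : Type*} [Fintype n] {A : Matrix n n ℂ} (hA : A.PosSemidef) :
    0 ≤ A.trace := by
  classical
  rw [Matrix.trace]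
  apply Finset.sum_nonneg
  intro i _
  have := hA.dotProduct_mulVec_nonneg (Pi.single i 1)
  simpa [dotProduct, Matrix.mulVec, Pi.single_apply, Finset.sum_ite_eq] using this

lemma psd_trace_mul_nonneg {n : Type*} [Fintype n] [DecidableEq n]
    {P S : Matrix n n ℂ} (hP : P.PosSemidef) (hS : S.PosSemidef) :
    0 ≤ (P * S).trace := by
  have hs : ∃ X : Matrix n n ℂ, P = star X * X := by
    open scoped MatrixOrder in exact CStarAlgebra.nonneg_iff_eq_star_mul_self.mp hP.nonneg
  obtain ⟨X, rfl⟩ := hs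
  rw [Matrix.star_eq_conjTranspose, mul_assoc, Matrix.trace_mul_comm]
  exact psd_trace_nonneg (hS.mul_mul_conjTranspose_same X)

/-- Convexity of `B ↦ Re(trace(B⁻¹ Σ))` on positive definite Hermitian matrices, for a
positive semidefinite `Σ`: any convex combination of positive definite matrices is
positive definite, and the value at the combination is at most the combination of the
values (finitely supported Jensen's inequality). -/
theorem stmt8 {n : Type*} [Fintype n] [DecidableEq n]
    (Sig : Matrix n n ℂ) (hSig : Sig.PosSemidef)
    {ι : Type*} [Fintype ι] [Nonempty ι]
    (B : ι → Matrix n n ℂ) (hB : ∀ i, (B i).PosDef)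
    (w : ι → ℝ) (hw : ∀ i, 0 ≤ w i) (hw1 : ∑ i, w i = 1) :
    (∑ i, w i • B i).PosDef ∧
      ((∑ i, w i • B i)⁻¹ * Sig).trace.re ≤ ∑ i, w i * ((B i)⁻¹ * Sig).trace.re := by
  classical
  set M := ∑ i, w i • B i with hMdef
  -- some index has positive weight
  obtain ⟨i₀, hi₀⟩ : ∃ i, 0 < w i := by
    by_contra h
    push_neg at h
    have : ∀ i, w i = 0 := fun i => le_antisymm (h i) (hw i)
    simp [this] at hw1
  -- M is PosDef
  have hM : M.PosDef := by
    have hrest : (∑ i ∈ Finset.univ.erase i₀, w i • B i).PosSemidef := by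
      refine Finset.sum_induction _ _ (fun a b ha hb => ha.add hb) Matrix.PosSemidef.zero
        (fun i _ => psd_smul (hB i).posSemidef (hw i))
    have hfirst : (w i₀ • B i₀).PosDef := by
      have : (w i₀ • B i₀) = ((w i₀ : ℂ) • B i₀) := by
        ext i j; simp [Complex.real_smul]
      rw [this]
      refine Matrix.PosDef.of_dotProduct_mulVec_pos ?_ ?_
      · rw [Matrix.IsHermitian, Matrix.conjTranspose_smul, Complex.star_def,
          Complex.conj_ofReal, (hB i₀).1.eq]
      · intro x hx
        rw [Matrix.smul_mulVec, dotProduct_smul]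
        have h1 := (hB i₀).dotProduct_mulVec_pos hx
        have : (0:ℂ) < (w i₀ : ℂ) := by exact_mod_cast hi₀
        calc (0:ℂ) = (w i₀ : ℂ) • (0:ℂ) := by simp
        _ < (w i₀ : ℂ) • (star x ⬝ᵥ B i₀ *ᵥ x) := by
            rw [smul_eq_mul, smul_eq_mul, mul_zero]
            exact mul_pos this h1
    have : M = w i₀ • B i₀ + ∑ i ∈ Finset.univ.erase i₀, w i • B i := by
      rw [hMdef, ← Finset.add_sum_erase _ _ (Finset.mem_univ i₀)]
    rw [this]
    exact hfirst.add_posSemidef hrest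
  refine ⟨hM, ?_⟩
  -- inverses are posdef/hermitian
  have hMinv : M⁻¹.PosDef := hM.inv
  have hMunit : IsUnit M.det := isUnit_iff_ne_zero.mpr hM.det_pos.ne'
  have hMMinv : M * M⁻¹ = 1 := Matrix.mul_nonsing_inv M hMunit
  have hMinvM : M⁻¹ * M = 1 := Matrix.nonsing_inv_mul M hMunit
  -- tangent inequality: D i PSD
  set D : ι → Matrix n n ℂ := fun i => (B i)⁻¹ - 2 • M⁻¹ + M⁻¹ * B i * M⁻¹ with hD
  have hDpsd : ∀ i, (D i).PosSemidef := by
    intro i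
    have hBi := hB i
    have hBiu : IsUnit (B i).det := isUnit_iff_ne_zero.mpr hBi.det_pos.ne'
    have hX : ((B i)⁻¹ - M⁻¹)ᴴ = (B i)⁻¹ - M⁻¹ := by
      rw [Matrix.conjTranspose_sub, hBi.inv.1, hMinv.1]
    have key : D i = ((B i)⁻¹ - M⁻¹) * B i * ((B i)⁻¹ - M⁻¹)ᴴ := by
      rw [hX, hD]
      simp only [Matrix.sub_mul, Matrix.mul_sub, Matrix.nonsing_inv_mul _ hBiu,
        Matrix.mul_nonsing_inv_cancel_right _ _ hBiu, Matrix.one_mul]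
      rw [two_smul]
      abel
    rw [key]
    exact hBi.posSemidef.mul_mul_conjTranspose_same _
  -- P = ∑ wᵢ Dᵢ = ∑ wᵢ Bᵢ⁻¹ - M⁻¹
  have hsum : ∑ i, w i • D i = (∑ i, w i • (B i)⁻¹) - M⁻¹ := by
    have h2 : ∑ i, w i • (2 • M⁻¹ : Matrix n n ℂ) = 2 • M⁻¹ := by
      rw [← Finset.sum_smul, hw1, one_smul]
    have h3 : ∑ i, w i • (M⁻¹ * B i * M⁻¹) = M⁻¹ := by
      have : ∑ i, w i • (M⁻¹ * B i * M⁻¹) = M⁻¹ * (∑ i, w i • B i) * M⁻¹ := by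
        rw [Finset.mul_sum, Finset.sum_mul]
        congr 1; ext i : 1
        rw [Matrix.mul_smul, Matrix.smul_mul]
      rw [this, ← hMdef, hMinvM, one_mul]
    calc ∑ i, w i • D i
        = (∑ i, w i • (B i)⁻¹) - (∑ i, w i • (2 • M⁻¹ : Matrix n n ℂ))
          + ∑ i, w i • (M⁻¹ * B i * M⁻¹) := by
          rw [← Finset.sum_sub_distrib, ← Finset.sum_add_distrib]
          congr 1; ext i : 1
          rw [hD]; simp [smul_sub, smul_add]
      _ = (∑ i, w i • (B i)⁻¹) - M⁻¹ := by
          rw [h2, h3, two_smul]; abel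
  have hPpsd : ((∑ i, w i • (B i)⁻¹) - M⁻¹).PosSemidef := by
    rw [← hsum]
    exact psd_sum (fun i => psd_smul (hDpsd i) (hw i))
  -- trace inequality
  have htr : 0 ≤ (((∑ i, w i • (B i)⁻¹) - M⁻¹) * Sig).trace := psd_trace_mul_nonneg hPpsd hSig
  have hexp : (((∑ i, w i • (B i)⁻¹) - M⁻¹) * Sig).trace
      = (∑ i, w i • ((B i)⁻¹ * Sig).trace) - (M⁻¹ * Sig).trace := by
    rw [Matrix.sub_mul, Matrix.trace_sub, Finset.sum_mul, Matrix.trace_sum]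
    congr 2
    ext i : 1
    rw [Matrix.smul_mul, Matrix.trace_smul]
  rw [hexp] at htr
  have hre : 0 ≤ ((∑ i, w i • ((B i)⁻¹ * Sig).trace) - (M⁻¹ * Sig).trace).re :=
    (RCLike.nonneg_iff.mp htr).1
  rw [Complex.sub_re] at hre
  have hsre : (∑ i, w i • ((B i)⁻¹ * Sig).trace).re = ∑ i, w i * ((B i)⁻¹ * Sig).trace.re := by
    rw [Complex.re_sum]
    congr 1; ext i : 1
    rw [Complex.real_smul, Complex.mul_re, Complex.ofReal_re, Complex.ofReal_im,
      zero_mul, sub_zero]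
  rw [hsre] at hre
  linarith
end
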